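/- arXiv:1207.1958 — 5 statements merged into one kernel-verified Lean document; each statement's English description precedes it below -/
import Mathlib

section
/- Let α, β be complex numbers with |α|² + |β|² = 1, written as α = cos(θ)e^{iα₁}, β = sin(θ)e^{iβ₁} with θ ∈ [0, π/2]. If φ = α₁ − β₁ − π and rt = π/2 − θ for some reals r, t, then the first component of exp(tM)·(α, β)ᵀ is zero, where M = ((0, r·e^{iφ}), (−r·e^{−iφ}, 0)). In particular exp(tM)·(α, β)ᵀ is collinear to (0, 1)ᵀ. -/
open Complex Real NormedSpace

/-- Let `α = cos θ e^{iα₁}`, `β = sin θ e^{iβ₁}` with `θ ∈ [0, π/2]` (so `|α|² + |β|² = 1`).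
If `φ = α₁ - β₁ - π` and `r t = π/2 - θ`, then the first component of
`exp(tM) (α, β)ᵀ` vanishes, where `M = [[0, r e^{iφ}], [-r e^{-iφ}, 0]]`; in particular
`exp(tM) (α, β)ᵀ` is collinear to `(0, 1)ᵀ`. -/
theorem exp_steers_to_second_basis_vector (θ α₁ β₁ r t φ : ℝ)
    (hθ : θ ∈ Set.Icc 0 (π / 2))
    (hφ : φ = α₁ - β₁ - π) (hrt : r * t = π / 2 - θ) :
    (NormedSpace.exp ((t : ℂ) •
          (!![0, (r : ℂ) * Complex.exp (φ * Complex.I);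
              -(r : ℂ) * Complex.exp (-(φ : ℂ) * Complex.I), 0] :
            Matrix (Fin 2) (Fin 2) ℂ))).mulVec
        ![(Real.cos θ : ℂ) * Complex.exp (α₁ * Complex.I),
          (Real.sin θ : ℂ) * Complex.exp (β₁ * Complex.I)] 0 = 0 ∧
      ∃ c : ℂ,
        (NormedSpace.exp ((t : ℂ) •
              (!![0, (r : ℂ) * Complex.exp (φ * Complex.I);
                  -(r : ℂ) * Complex.exp (-(φ : ℂ) * Complex.I), 0] :
                Matrix (Fin 2) (Fin 2) ℂ))).mulVec
            ![(Real.cos θ : ℂ) * Complex.exp (α₁ * Complex.I),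
              (Real.sin θ : ℂ) * Complex.exp (β₁ * Complex.I)] = c • ![0, 1] := by
  letI : SeminormedRing (Matrix (Fin 2) (Fin 2) ℂ) := Matrix.linftyOpSemiNormedRing
  letI : NormedRing (Matrix (Fin 2) (Fin 2) ℂ) := Matrix.linftyOpNormedRing
  letI : NormedAlgebra ℝ (Matrix (Fin 2) (Fin 2) ℂ) := Matrix.linftyOpNormedAlgebra
  letI : NormedAlgebra ℂ (Matrix (Fin 2) (Fin 2) ℂ) := Matrix.linftyOpNormedAlgebra
  set K : Matrix (Fin 2) (Fin 2) ℂ :=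
    !![0, Complex.exp (φ * Complex.I); -Complex.exp (-(φ : ℂ) * Complex.I), 0] with hKdef
  have hK : K * K = -1 := by
    ext i j
    fin_cases i <;> fin_cases j <;>
      simp [hKdef, Matrix.mul_apply, Fin.sum_univ_two, ← Complex.exp_add] <;> ring_nf <;>
      simp [← Complex.exp_add]
  set s : ℝ := r * t with hs
  have hM : (t : ℂ) •
      (!![0, (r : ℂ) * Complex.exp (φ * Complex.I);
          -(r : ℂ) * Complex.exp (-(φ : ℂ) * Complex.I), 0] :
        Matrix (Fin 2) (Fin 2) ℂ) = s • K := by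
    ext i j
    fin_cases i <;> fin_cases j <;>
      simp [hKdef, hs, Matrix.smul_apply, Complex.real_smul] <;> push_cast <;> ring
  have f : ℂ →ₐ[ℝ] Matrix (Fin 2) (Fin 2) ℂ := Complex.liftAux K hK
  have hfc : Continuous (Complex.liftAux K hK) :=
    (Complex.liftAux K hK).toLinearMap.continuous_of_finiteDimensional
  have hexp : NormedSpace.exp ((s : ℝ) • K) =
      algebraMap ℝ _ (Real.cos s) + (Real.sin s) • K := by
    have h1 : NormedSpace.exp ((s : ℝ) • K) = NormedSpace.exp ((s : ℝ) • K) := by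
      rfl
    rw [h1]
    have h2 : (s : ℝ) • K = Complex.liftAux K hK ((s : ℝ) * Complex.I) := by
      simp [Complex.liftAux_apply]
    rw [h2]; erw [← map_exp (Complex.liftAux K hK) hfc]
    rw [← Complex.exp_eq_exp_ℂ]
    simp [Complex.liftAux_apply, Complex.exp_ofReal_mul_I_re, Complex.exp_ofReal_mul_I_im]
  have hcos : Real.cos s = Real.sin θ := by rw [hrt, Real.cos_pi_div_two_sub]
  have hsin : Real.sin s = Real.cos θ := by rw [hrt, Real.sin_pi_div_two_sub]
  have hkey : Complex.exp (φ * Complex.I) * Complex.exp (β₁ * Complex.I) =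
      -Complex.exp (α₁ * Complex.I) := by
    rw [← Complex.exp_add]
    have : (φ : ℂ) * Complex.I + (β₁ : ℂ) * Complex.I
        = (α₁ : ℂ) * Complex.I - (π : ℂ) * Complex.I := by
      rw [hφ]; push_cast; ring
    rw [this, Complex.exp_sub, Complex.exp_pi_mul_I]
    field_simp
  have hfirst : (NormedSpace.exp ((t : ℂ) •
      (!![0, (r : ℂ) * Complex.exp (φ * Complex.I);
          -(r : ℂ) * Complex.exp (-(φ : ℂ) * Complex.I), 0] :
        Matrix (Fin 2) (Fin 2) ℂ))).mulVec
      ![(Real.cos θ : ℂ) * Complex.exp (α₁ * Complex.I),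
        (Real.sin θ : ℂ) * Complex.exp (β₁ * Complex.I)] 0 = 0 := by
    rw [hM, hexp, hcos, hsin]
    simp [Matrix.mulVec, dotProduct, Fin.sum_univ_two, hKdef, Matrix.smul_apply,
      Matrix.algebraMap_matrix_apply, Complex.real_smul]
    linear_combination Complex.sin θ * Complex.cos θ * hkey
  refine ⟨hfirst, ?_⟩
  refine ⟨(NormedSpace.exp ((t : ℂ) •
      (!![0, (r : ℂ) * Complex.exp (φ * Complex.I);
          -(r : ℂ) * Complex.exp (-(φ : ℂ) * Complex.I), 0] :
        Matrix (Fin 2) (Fin 2) ℂ))).mulVec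
      ![(Real.cos θ : ℂ) * Complex.exp (α₁ * Complex.I),
        (Real.sin θ : ℂ) * Complex.exp (β₁ * Complex.I)] 1, ?_⟩
  funext i
  fin_cases i
  · simpa using hfirst
  · simp
end

section
/- If a measure space Ω admits two disjoint measurable sets of positive finite measure, then for every unit vector ψ₀ ∈ L²(Ω, ℂ) and every essentially bounded real-valued g, the closure of the orbit {e^{iKg}·ψ₀ : K ∈ ℝ} is a proper subset of the unit sphere of L²(Ω, ℂ). -/
open MeasureTheory Complex Filter

section aux

variable {Ω : Type*} [MeasurableSpace Ω] {μ : Measure Ω}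

/-- Orbit elements have pointwise modulus equal to that of `ψ₀`, a.e. -/
lemma orbit_norm_ae {g : Ω → ℝ} {ψ₀ φ : Lp ℂ 2 μ} {K : ℝ}
    (h : ⇑φ =ᵐ[μ] fun x => Complex.exp (Complex.I * K * g x) * ψ₀ x) :
    (fun x => ‖φ x‖) =ᵐ[μ] fun x => ‖ψ₀ x‖ := by
  filter_upwards [h] with x hx
  rw [hx, norm_mul, Complex.norm_exp]
  have : (Complex.I * (K : ℂ) * (g x : ℂ)).re = 0 := by simp
  rw [this, Real.exp_zero, one_mul]

lemma mem_closure_norm_ae {g : Ω → ℝ} {ψ₀ ψ : Lp ℂ 2 μ}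
    (hψ : ψ ∈ closure {ψ : Lp ℂ 2 μ | ∃ K : ℝ,
        ⇑ψ =ᵐ[μ] fun x => Complex.exp (Complex.I * K * g x) * ψ₀ x}) :
    (fun x => ‖ψ x‖) =ᵐ[μ] fun x => ‖ψ₀ x‖ := by
  obtain ⟨φ, hφ, hφlim⟩ := mem_closure_iff_seq_limit.mp hψ
  -- Lp convergence gives convergence in measure
  have htm : TendstoInMeasure μ (fun n => ⇑(φ n)) atTop ⇑ψ := by
    refine tendstoInMeasure_of_tendsto_eLpNorm (p := 2) (by norm_num)
      (fun n => Lp.aestronglyMeasurable _) (Lp.aestronglyMeasurable _) ?_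
    haveI : Fact ((1:ENNReal) ≤ 2) := ⟨by norm_num⟩
    exact (Lp.tendsto_Lp_iff_tendsto_eLpNorm' φ ψ).mp hφlim
  obtain ⟨ns, -, hns⟩ := htm.exists_seq_tendsto_ae
  have hall : ∀ᵐ x ∂μ, ∀ n, ‖φ n x‖ = ‖ψ₀ x‖ := by
    rw [ae_all_iff]
    intro n
    obtain ⟨K, hK⟩ := hφ n
    exact orbit_norm_ae hK
  filter_upwards [hns, hall] with x hx hx'
  have : Tendsto (fun k => ‖φ (ns k) x‖) atTop (nhds ‖ψ x‖) := hx.norm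
  have h2 : Tendsto (fun _ : ℕ => ‖ψ₀ x‖) atTop (nhds ‖ψ x‖) := by
    refine this.congr fun k => ?_
    exact hx' (ns k)
  exact (tendsto_nhds_unique tendsto_const_nhds h2).symm

/-- A normalized indicator function in `Lp ℂ 2 μ`. -/
noncomputable def normInd (s : Set Ω) (hs : MeasurableSet s) (hsfin : μ s ≠ ⊤) : Lp ℂ 2 μ :=
  indicatorConstLp 2 hs hsfin (((Real.sqrt (μ s).toReal)⁻¹ : ℝ) : ℂ)

lemma normInd_norm {s : Set Ω} (hs : MeasurableSet s) (hs0 : 0 < μ s) (hsfin : μ s ≠ ⊤) :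
    ‖normInd s hs hsfin‖ = 1 := by
  have hm : 0 < (μ s).toReal := ENNReal.toReal_pos hs0.ne' hsfin
  rw [normInd, norm_indicatorConstLp (by norm_num) (by norm_num)]
  have h1 : ‖(((Real.sqrt (μ s).toReal)⁻¹ : ℝ) : ℂ)‖ = (Real.sqrt (μ s).toReal)⁻¹ := by
    simp [abs_of_nonneg, Real.sqrt_nonneg]
  rw [h1]
  have h2 : (1 : ℝ) / ENNReal.toReal 2 = 1 / 2 := by norm_num
  rw [h2, ← Real.sqrt_eq_rpow]
  exact inv_mul_cancel₀ (Real.sqrt_ne_zero'.mpr hm)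

end aux

/-- If `Ω` admits two disjoint measurable sets of positive finite measure, then for every unit
vector `ψ₀ ∈ L²(Ω, ℂ)` and every essentially bounded measurable real `g`, the closure of the
orbit `{e^{iKg} ψ₀ : K ∈ ℝ}` is a proper subset of the unit sphere of `L²(Ω, ℂ)`. -/
theorem orbit_closure_proper_subset_of_sphere {Ω : Type*} [MeasurableSpace Ω] (μ : Measure Ω)
    (s t : Set Ω) (hs : MeasurableSet s) (ht : MeasurableSet t) (hst : Disjoint s t)
    (hs0 : 0 < μ s) (hsfin : μ s < ⊤) (ht0 : 0 < μ t) (htfin : μ t < ⊤)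
    (g : Ω → ℝ) (hg : Measurable g) (hg_bdd : ∃ C : ℝ, ∀ᵐ x ∂μ, |g x| ≤ C)
    (ψ₀ : Lp ℂ 2 μ) (hψ₀ : ‖ψ₀‖ = 1) :
    closure {ψ : Lp ℂ 2 μ | ∃ K : ℝ,
        ⇑ψ =ᵐ[μ] fun x => Complex.exp (Complex.I * K * g x) * ψ₀ x} ⊂
      Metric.sphere (0 : Lp ℂ 2 μ) 1 := by
  set O := {ψ : Lp ℂ 2 μ | ∃ K : ℝ,
      ⇑ψ =ᵐ[μ] fun x => Complex.exp (Complex.I * K * g x) * ψ₀ x} with hO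
  have hsub : closure O ⊆ Metric.sphere (0 : Lp ℂ 2 μ) 1 := by
    refine closure_minimal ?_ Metric.isClosed_sphere
    rintro φ ⟨K, hK⟩
    rw [mem_sphere_zero_iff_norm]
    rw [Lp.norm_def, eLpNorm_congr_norm_ae (orbit_norm_ae hK), ← Lp.norm_def]
    exact hψ₀
  refine (Set.ssubset_iff_of_subset hsub).mpr ?_
  by_contra h
  push_neg at h
  set ψs := normInd s hs hsfin.ne with hψs
  set ψt := normInd t ht htfin.ne with hψt
  have hψsn : ‖ψs‖ = 1 := normInd_norm hs hs0 hsfin.ne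
  have hψtn : ‖ψt‖ = 1 := normInd_norm ht ht0 htfin.ne
  have hmems : ψs ∈ closure O := h ψs (mem_sphere_zero_iff_norm.mpr hψsn)
  have hmemt : ψt ∈ closure O := h ψt (mem_sphere_zero_iff_norm.mpr hψtn)
  have e1 := mem_closure_norm_ae hmems
  have e2 := mem_closure_norm_ae hmemt
  have cs : ⇑ψs =ᵐ[μ] s.indicator fun _ => (((Real.sqrt (μ s).toReal)⁻¹ : ℝ) : ℂ) :=
    indicatorConstLp_coeFn
  have ct : ⇑ψt =ᵐ[μ] t.indicator fun _ => (((Real.sqrt (μ t).toReal)⁻¹ : ℝ) : ℂ) :=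
    indicatorConstLp_coeFn
  have h0 : ⇑ψ₀ =ᵐ[μ] 0 := by
    filter_upwards [e1, e2, cs, ct] with x he1 he2 hcs hct
    by_cases hxs : x ∈ s
    · have hxt : x ∉ t := fun hxt => Set.disjoint_left.mp hst hxs hxt
      have : ‖ψ₀ x‖ = 0 := by
        rw [← he2, hct, Set.indicator_of_notMem hxt, norm_zero]
      simpa using norm_eq_zero.mp this
    · have : ‖ψ₀ x‖ = 0 := by
        rw [← he1, hcs, Set.indicator_of_notMem hxs, norm_zero]
      simpa using norm_eq_zero.mp this
  have : ‖ψ₀‖ = 0 := by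
    rw [Lp.norm_def, eLpNorm_congr_ae h0, eLpNorm_zero, ENNReal.toReal_zero]
  rw [hψ₀] at this
  exact one_ne_zero this
end

section
/- Let A be a bounded skew-adjoint operator on a Hilbert space H, B a bounded skew-adjoint operator, u a piecewise constant real function, and let Υ_t be the propagator of ψ' = (A + u(t)B)ψ. Define Y_t = e^{−(∫₀ᵗ u)B} ∘ Υ_t. Then for every unit vector ψ₀ and every fixed vector φ, the function t ↦ ⟨φ, Y_t ψ₀⟩ is Lipschitz with Lipschitz constant at most ‖A‖·‖φ‖. -/
set_option maxHeartbeats 1000000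
set_option synthInstance.maxHeartbeats 400000


open Complex NormedSpace intervalIntegral

section Aux

open Set MeasureTheory

/-- A continuous function on `ℝ` which has a derivative of norm at most `C` outside a finite
set is Lipschitz with constant `C`. -/
theorem lipschitzWith_of_hasDerivAt_off_finite {F : Type*} [NormedAddCommGroup F]
    [NormedSpace ℝ F] {f f' : ℝ → F} {D : Set ℝ} (hD : D.Finite) (hf : Continuous f)
    (hd : ∀ t ∉ D, HasDerivAt f (f' t) t) (C : NNReal) (hC : ∀ t ∉ D, ‖f' t‖ ≤ C) :
    LipschitzWith C f := by
  -- base case: no exceptional points strictly between `a` and `b`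
  have base : ∀ a b : ℝ, a ≤ b → D ∩ Ioo a b = ∅ → ‖f b - f a‖ ≤ C * (b - a) := by
    intro a b hab hempty
    rcases eq_or_lt_of_le hab with rfl | hlt
    · simp
    have key : ∀ ε : ℝ, 0 < ε → ε < (b - a) / 2 →
        ‖f (b - ε) - f (a + ε)‖ ≤ C * (b - a) := by
      intro ε hε hε2
      have hsub : Icc (a + ε) (b - ε) ⊆ Ioo a b := by
        intro x hx
        constructor
        · linarith [hx.1]
        · linarith [hx.2]
      have hDfree : ∀ x ∈ Icc (a + ε) (b - ε), x ∉ D := by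
        intro x hx hxD
        exact absurd (Set.mem_inter hxD (hsub hx)) (by simp [hempty])
      have h1 : ∀ x ∈ Icc (a + ε) (b - ε),
          HasDerivWithinAt f (f' x) (Icc (a + ε) (b - ε)) x := fun x hx =>
        (hd x (hDfree x hx)).hasDerivWithinAt
      have h2 : ∀ x ∈ Ico (a + ε) (b - ε), ‖f' x‖ ≤ C := fun x hx =>
        hC x (hDfree x (Ico_subset_Icc_self hx))
      have hle : a + ε ≤ b - ε := by linarith
      have := norm_image_sub_le_of_norm_deriv_le_segment' h1 h2 (b - ε)
        (right_mem_Icc.2 hle)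
      calc ‖f (b - ε) - f (a + ε)‖ ≤ C * (b - ε - (a + ε)) := this
        _ ≤ C * (b - a) := by
            apply mul_le_mul_of_nonneg_left _ C.coe_nonneg
            linarith
    -- pass to the limit ε → 0⁺
    have hto : Filter.Tendsto (fun ε : ℝ => ‖f (b - ε) - f (a + ε)‖)
        (nhdsWithin 0 (Ioi 0)) (nhds ‖f b - f a‖) := by
      have h1 : Filter.Tendsto (fun ε : ℝ => f (b - ε) - f (a + ε))
          (nhds 0) (nhds (f b - f a)) := by
        have hb : Filter.Tendsto (fun ε : ℝ => b - ε) (nhds 0) (nhds b) := by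
          simpa using (tendsto_const_nhds (x := b)).sub (Filter.tendsto_id (α := ℝ).mono_left le_rfl |>.mono_right le_rfl : Filter.Tendsto id (nhds (0:ℝ)) (nhds 0))
        have ha : Filter.Tendsto (fun ε : ℝ => a + ε) (nhds 0) (nhds a) := by
          simpa using (tendsto_const_nhds (x := a)).add (Filter.tendsto_id (α := ℝ).mono_left le_rfl |>.mono_right le_rfl : Filter.Tendsto id (nhds (0:ℝ)) (nhds 0))
        exact ((hf.continuousAt.tendsto.comp hb).sub (hf.continuousAt.tendsto.comp ha))
      exact ((h1.mono_left nhdsWithin_le_nhds).norm)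
    refine le_of_tendsto hto ?_
    filter_upwards [Ioo_mem_nhdsGT_of_mem (Set.left_mem_Ico.2 (by linarith : (0:ℝ) < (b-a)/2))]
      with ε hε
    exact key ε hε.1 hε.2
  -- induction on the number of exceptional points in `Ioo a b`
  have main : ∀ n : ℕ, ∀ a b : ℝ, a ≤ b → (D ∩ Ioo a b).ncard ≤ n →
      ‖f b - f a‖ ≤ C * (b - a) := by
    intro n
    induction n with
    | zero =>
      intro a b hab hcard
      have hfin : (D ∩ Ioo a b).Finite := hD.inter_of_left _
      have : D ∩ Ioo a b = ∅ := by
        rw [← Set.ncard_eq_zero hfin]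
        omega
      exact base a b hab this
    | succ n ih =>
      intro a b hab hcard
      rcases Set.eq_empty_or_nonempty (D ∩ Ioo a b) with hempty | ⟨d, hd', hdo⟩
      · exact base a b hab hempty
      have hfin : (D ∩ Ioo a b).Finite := hD.inter_of_left _
      have hsub1 : D ∩ Ioo a d ⊆ (D ∩ Ioo a b) \ {d} := by
        rintro x ⟨hxD, hx1, hx2⟩
        exact ⟨⟨hxD, hx1, hx2.trans hdo.2⟩, by rintro rfl; exact absurd hx2 (lt_irrefl _)⟩
      have hsub2 : D ∩ Ioo d b ⊆ (D ∩ Ioo a b) \ {d} := by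
        rintro x ⟨hxD, hx1, hx2⟩
        exact ⟨⟨hxD, hdo.1.trans hx1, hx2⟩, by rintro rfl; exact absurd hx1 (lt_irrefl _)⟩
      have hdm : d ∈ D ∩ Ioo a b := ⟨hd', hdo⟩
      have hcard' : ((D ∩ Ioo a b) \ {d}).ncard ≤ n := by
        have := Set.ncard_diff_singleton_of_mem hdm
        omega
      have hc1 : (D ∩ Ioo a d).ncard ≤ n :=
        le_trans (Set.ncard_le_ncard hsub1 hfin.diff) hcard'
      have hc2 : (D ∩ Ioo d b).ncard ≤ n :=
        le_trans (Set.ncard_le_ncard hsub2 hfin.diff) hcard'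
      calc ‖f b - f a‖ ≤ ‖f b - f d‖ + ‖f d - f a‖ := norm_sub_le_norm_sub_add_norm_sub _ _ _
        _ ≤ C * (b - d) + C * (d - a) := add_le_add (ih d b hdo.2.le hc2) (ih a d hdo.1.le hc1)
        _ = C * (b - a) := by ring
  -- conclude
  refine LipschitzWith.of_dist_le_mul fun x y => ?_
  rcases le_total x y with h | h
  · rw [dist_eq_norm, norm_sub_rev, Real.dist_eq, _root_.abs_of_nonpos (by linarith)]
    have := main _ x y h le_rfl
    calc ‖f y - f x‖ ≤ C * (y - x) := this
      _ = C * -(x - y) := by ring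
  · rw [dist_eq_norm, Real.dist_eq, _root_.abs_of_nonneg (by linarith)]
    exact main _ y x h le_rfl

end Aux

/-- Let `A, B` be bounded skew-adjoint operators on a complex Hilbert space `H`, `u` a piecewise
constant real control, and `Υ` the (unitary) propagator of `ψ' = (A + u(t)B)ψ` with `Υ 0 = Id`.
Set `Y_t = e^{-(∫₀ᵗ u) B} ∘ Υ_t`. Then for every unit vector `ψ₀` and every vector `φv`, the map
`t ↦ ⟨φv, Y_t ψ₀⟩` is Lipschitz with constant at most `‖A‖ ‖φv‖`. -/
theorem abs_observable_lipschitz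
    {H : Type*} [NormedAddCommGroup H] [InnerProductSpace ℂ H] [CompleteSpace H]
    (A B : H →L[ℂ] H)
    (hA : ContinuousLinearMap.adjoint A = -A) (hB : ContinuousLinearMap.adjoint B = -B)
    (u : ℝ → ℝ) (D : Set ℝ) (hD : D.Finite)
    (hu : ∀ t ∉ D, ∀ᶠ s in nhds t, u s = u t)
    (Υ : ℝ → H →L[ℂ] H) (hΥ0 : Υ 0 = 1)
    (hΥunitary : ∀ t (ψ : H), ‖Υ t ψ‖ = ‖ψ‖)
    (hΥcont : ∀ ψ : H, Continuous fun t => Υ t ψ)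
    (hode : ∀ (ψ : H), ∀ t ∉ D,
      HasDerivAt (fun s => Υ s ψ) (A (Υ t ψ) + u t • B (Υ t ψ)) t)
    (ψ₀ : H) (hψ₀ : ‖ψ₀‖ = 1) (φv : H) :
    LipschitzWith (‖A‖₊ * ‖φv‖₊)
      (fun t : ℝ =>
        (inner ℂ φv
          (NormedSpace.exp (-(∫ τ in (0 : ℝ)..t, u τ) • B) (Υ t ψ₀)) : ℂ)) := by
  classical
  open Set MeasureTheory in
  -- `u` is constant on intervals avoiding `D`
  have hconst : ∀ x y : ℝ, x ≤ y → Icc x y ∩ D = ∅ → u x = u y := by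
    intro x y hxy hfree
    have hDfree : ∀ t ∈ Icc x y, t ∉ D := by
      intro t ht htD
      exact absurd (Set.mem_inter ht htD) (by simp [Set.inter_comm, hfree])
    set U : Set ℝ := interior {t | u t = u x}
    set V : Set ℝ := interior {t | u t ≠ u x}
    have hsub : Icc x y ⊆ U ∪ V := by
      intro t ht
      have h := hu t (hDfree t ht)
      by_cases hx : u t = u x
      · left
        exact mem_interior_iff_mem_nhds.2 (h.mono fun s hs => hs.trans hx)
      · right
        exact mem_interior_iff_mem_nhds.2 (h.mono fun s hs => hs.trans_ne hx)
    have hdisj : Disjoint U V := by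
      refine Set.disjoint_left.2 fun t htU htV => ?_
      exact absurd (interior_subset htU) (interior_subset htV)
    rcases (isPreconnected_Icc).subset_or_subset isOpen_interior isOpen_interior hdisj hsub with
      hU | hV
    · exact (interior_subset (hU (Set.right_mem_Icc.2 hxy))).symm
    · exact absurd rfl (interior_subset (hV (Set.left_mem_Icc.2 hxy)))
  -- `u` is locally integrable
  have hloc : MeasureTheory.LocallyIntegrable u volume := by
    intro x
    by_cases hx : x ∈ D
    · -- `x` is isolated in `D`
      obtain ⟨ε, hε, hball⟩ : ∃ ε > 0, Metric.ball x ε ∩ D ⊆ {x} := by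
        have hcl : IsClosed (D \ {x}) := hD.diff.isClosed
        have hxn : x ∈ (D \ {x})ᶜ := by simp
        rcases Metric.isOpen_iff.1 hcl.isOpen_compl x hxn with ⟨ε, hε, hsub⟩
        refine ⟨ε, hε, fun y ⟨hy1, hy2⟩ => ?_⟩
        have := hsub hy1
        simp only [Set.mem_compl_iff, Set.mem_diff, Set.mem_singleton_iff, not_and, not_not] at this
        exact this hy2
      refine ⟨Metric.ball x ε, Metric.ball_mem_nhds x hε, ?_⟩
      have hIoo1 : IntegrableOn u (Ioo (x - ε) x) volume := by
        have hval : ∀ y ∈ Ioo (x - ε) x, u y = u (x - ε/2) := by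
          intro y hy
          have hfree : ∀ z w : ℝ, z ∈ Ioo (x - ε) x → w ∈ Ioo (x - ε) x → z ≤ w → u z = u w := by
            intro z w hz hw hzw
            apply hconst z w hzw
            apply Set.eq_empty_of_forall_notMem
            rintro t ⟨ht1, ht2⟩
            have ht : t ∈ Ioo (x - ε) x := ⟨lt_of_lt_of_le hz.1 ht1.1, lt_of_le_of_lt ht1.2 hw.2⟩
            have htb : t ∈ Metric.ball x ε := by
              rw [Metric.mem_ball, Real.dist_eq, abs_lt]; constructor <;> [linarith [ht.1]; linarith [ht.2]]
            have := hball ⟨htb, ht2⟩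
            simp only [Set.mem_singleton_iff] at this
            exact absurd (this ▸ ht.2) (lt_irrefl x)
          have hmid : x - ε/2 ∈ Ioo (x - ε) x := by constructor <;> linarith
          rcases le_total y (x - ε/2) with h | h
          · exact hfree y _ hy hmid h
          · exact (hfree _ y hmid hy h).symm
        exact (integrableOn_const measure_Ioo_lt_top.ne).congr_fun
          (fun y hy => (hval y hy).symm) measurableSet_Ioo
      have hIoo2 : IntegrableOn u (Ioo x (x + ε)) volume := by
        have hval : ∀ y ∈ Ioo x (x + ε), u y = u (x + ε/2) := by
          intro y hy
          have hfree : ∀ z w : ℝ, z ∈ Ioo x (x + ε) → w ∈ Ioo x (x + ε) → z ≤ w → u z = u w := by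
            intro z w hz hw hzw
            apply hconst z w hzw
            apply Set.eq_empty_of_forall_notMem
            rintro t ⟨ht1, ht2⟩
            have ht : t ∈ Ioo x (x + ε) := ⟨lt_of_lt_of_le hz.1 ht1.1, lt_of_le_of_lt ht1.2 hw.2⟩
            have htb : t ∈ Metric.ball x ε := by
              rw [Metric.mem_ball, Real.dist_eq, abs_lt]; constructor <;> [linarith [ht.1]; linarith [ht.2]]
            have := hball ⟨htb, ht2⟩
            simp only [Set.mem_singleton_iff] at this
            exact absurd (this ▸ ht.1) (lt_irrefl x)
          have hmid : x + ε/2 ∈ Ioo x (x + ε) := by constructor <;> linarith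
          rcases le_total y (x + ε/2) with h | h
          · exact hfree y _ hy hmid h
          · exact (hfree _ y hmid hy h).symm
        exact (integrableOn_const measure_Ioo_lt_top.ne).congr_fun
          (fun y hy => (hval y hy).symm) measurableSet_Ioo
      have hsing : IntegrableOn u {x} volume := by
        exact (integrableOn_const (C := u x) (by simp)).congr_fun
          (fun y hy => by simp only [Set.mem_singleton_iff] at hy; rw [hy]) (measurableSet_singleton x)
      have hcover : Metric.ball x ε ⊆ (Ioo (x - ε) x ∪ Ioo x (x + ε)) ∪ {x} := by
        intro y hy
        rw [Metric.mem_ball, Real.dist_eq, abs_lt] at hy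
        rcases lt_trichotomy y x with h | h | h
        · exact Or.inl (Or.inl ⟨by linarith [hy.1], h⟩)
        · exact Or.inr (by simp [h])
        · exact Or.inl (Or.inr ⟨h, by linarith [hy.2]⟩)
      exact ((hIoo1.union hIoo2).union hsing).mono_set hcover
    · have h := hu x hx
      rcases Metric.mem_nhds_iff.1 h with ⟨ε, hε, hball⟩
      refine ⟨Metric.ball x ε, Metric.ball_mem_nhds x hε, ?_⟩
      exact (integrableOn_const measure_ball_lt_top.ne).congr_fun
        (fun y hy => (hball hy).symm) Metric.isOpen_ball.measurableSet
  -- interval integrability and the primitive of `u`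
  have hInt : ∀ a b : ℝ, IntervalIntegrable u volume a b := fun a b =>
    (hloc.integrableOn_isCompact isCompact_uIcc).intervalIntegrable
  set g : ℝ → ℝ := fun t => ∫ τ in (0 : ℝ)..t, u τ with hg
  have hgcont : Continuous g := intervalIntegral.continuous_primitive (fun a b => hInt a b) 0
  have hgderiv : ∀ t ∉ D, HasDerivAt g (u t) t := by
    intro t ht
    have hmeas : StronglyMeasurableAtFilter u (nhds t) volume := by
      rcases Metric.mem_nhds_iff.1 (hu t ht) with ⟨ε, hε, hball⟩
      refine ⟨Metric.ball t ε, Metric.ball_mem_nhds t hε, ?_⟩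
      refine (aestronglyMeasurable_const (b := u t)).congr ?_
      exact ((ae_restrict_iff' Metric.isOpen_ball.measurableSet).2
        (Filter.Eventually.of_forall fun y hy => (hball hy).symm))
    have hct : ContinuousAt u t := by
      have hcongr : u =ᶠ[nhds t] fun _ => u t := hu t ht
      exact ContinuousAt.congr continuousAt_const hcongr.symm
    exact intervalIntegral.integral_hasDerivAt_right (hInt 0 t) hmeas hct
  -- the exponential over `ℝ` instead of `ℂ`
  have hexp : ∀ c : ℝ, NormedSpace.exp (c • B) = NormedSpace.exp (c • B) := by
    intro c; rfl
  set Eop : ℝ → (H →L[ℂ] H) := fun t => NormedSpace.exp ((-(g t)) • B) with hEop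
  -- `Eop t` is an isometry
  have hiso : ∀ c : ℝ, ∀ ψ : H, ‖NormedSpace.exp (c • B) ψ‖ = ‖ψ‖ := by
    intro c ψ
    set E : H →L[ℂ] H := NormedSpace.exp (c • B) with hE
    have hstar : star (c • B) = -(c • B) := by
      rw [star_smul, star_trivial, ContinuousLinearMap.star_eq_adjoint, hB, smul_neg]
    have hadj : ContinuousLinearMap.adjoint E = NormedSpace.exp (-(c • B)) := by
      rw [hE, ← ContinuousLinearMap.star_eq_adjoint, star_exp, hstar]
    have hcomp : ContinuousLinearMap.adjoint E * E = 1 := by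
      rw [hadj, hE, ← exp_add_of_commute_of_mem_ball (𝕂 := ℝ) (Commute.refl (c • B)).neg_left
          ((expSeries_radius_eq_top ℝ (H →L[ℂ] H)).symm ▸ edist_lt_top _ _)
          ((expSeries_radius_eq_top ℝ (H →L[ℂ] H)).symm ▸ edist_lt_top _ _), neg_add_cancel,
        NormedSpace.exp_zero]
    have hinner : (inner ℂ ψ ψ : ℂ) = inner ℂ (E ψ) (E ψ) := by
      have h1 := ContinuousLinearMap.adjoint_inner_left E ψ (E ψ)
      have h2 : ContinuousLinearMap.adjoint E (E ψ) = ψ := by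
        have := congrArg (fun T : H →L[ℂ] H => T ψ) hcomp
        simpa [ContinuousLinearMap.mul_apply] using this
      rw [h2] at h1
      exact h1
    have hsq : ‖ψ‖ ^ 2 = ‖E ψ‖ ^ 2 := by
      have h1 : (inner ℂ ψ ψ : ℂ) = (‖ψ‖ : ℂ) ^ 2 := inner_self_eq_norm_sq_to_K ψ
      have h2 : (inner ℂ (E ψ) (E ψ) : ℂ) = (‖E ψ‖ : ℂ) ^ 2 := inner_self_eq_norm_sq_to_K (E ψ)
      have := h1.symm.trans (hinner.trans h2)
      exact_mod_cast this
    calc ‖E ψ‖ = Real.sqrt (‖E ψ‖ ^ 2) := (Real.sqrt_sq (norm_nonneg _)).symm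
      _ = Real.sqrt (‖ψ‖ ^ 2) := by rw [hsq]
      _ = ‖ψ‖ := Real.sqrt_sq (norm_nonneg _)
  -- the function and its derivative
  set Y : ℝ → H := fun t => Eop t (Υ t ψ₀) with hY
  set f : ℝ → ℂ := fun t => inner ℂ φv (Y t) with hf
  set f' : ℝ → ℂ := fun t => inner ℂ φv (Eop t (A (Υ t ψ₀))) with hf'
  have hYderiv : ∀ t ∉ D, HasDerivAt Y (Eop t (A (Υ t ψ₀))) t := by
    intro t ht
    have hc : HasDerivAt (fun s => -(g s)) (-(u t)) t := (hgderiv t ht).neg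
    have hΦ : HasDerivAt (fun c : ℝ => NormedSpace.exp (c • B))
        (NormedSpace.exp ((-(g t)) • B) * B) (-(g t)) := hasDerivAt_exp_smul_const B _
    have hEd : HasDerivAt Eop ((-(u t)) • (NormedSpace.exp ((-(g t)) • B) * B)) t :=
      by have h := HasDerivAt.scomp t hΦ hc; exact h
    have hWd := hode ψ₀ t ht
    set L : (H →L[ℂ] H) →L[ℝ] (H →L[ℝ] H) :=
      ContinuousLinearMap.restrictScalarsL ℂ H H ℝ ℝ with hL
    have hEd' : HasDerivAt (fun s => L (Eop s))
        (L ((-(u t)) • (NormedSpace.exp ((-(g t)) • B) * B))) t :=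
      L.hasFDerivAt.comp_hasDerivAt t hEd
    have h := hEd'.clm_apply hWd
    have heq : (fun s => (L (Eop s)) ((Υ s) ψ₀)) = Y := rfl
    rw [heq] at h
    convert h using 1
    show Eop t (A ((Υ t) ψ₀)) =
      ((-(u t)) • (NormedSpace.exp ((-(g t)) • B) * B)) ((Υ t) ψ₀) +
        (Eop t) (A ((Υ t) ψ₀) + u t • B ((Υ t) ψ₀))
    rw [ContinuousLinearMap.smul_apply, ContinuousLinearMap.mul_apply, map_add,
      ContinuousLinearMap.map_smul_of_tower]
    have hEt : NormedSpace.exp ((-(g t)) • B) = Eop t := rfl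
    rw [hEt, neg_smul]
    abel
  have hfderiv : ∀ t ∉ D, HasDerivAt f (f' t) t := by
    intro t ht
    have := (hasDerivAt_const t φv).inner ℂ (hYderiv t ht)
    simpa [hf, hf'] using this
  have hfcont : Continuous f := by
    have hEcont : Continuous Eop := by
      have h1 : Continuous fun t : ℝ => (-(g t)) • B := (hgcont.neg).smul continuous_const
      exact (continuous_iff_continuousAt.2 fun x =>
        (exp_analytic (𝕂 := ℝ) (x : H →L[ℂ] H)).continuousAt).comp h1
    exact Continuous.inner continuous_const (hEcont.clm_apply (hΥcont ψ₀))
  have hbound : ∀ t ∉ D, ‖f' t‖ ≤ (‖A‖₊ * ‖φv‖₊ : NNReal) := by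
    intro t ht
    have h1 : ‖f' t‖ ≤ ‖φv‖ * ‖Eop t (A (Υ t ψ₀))‖ := norm_inner_le_norm _ _
    have h2 : ‖Eop t (A (Υ t ψ₀))‖ = ‖A (Υ t ψ₀)‖ := hiso _ _
    have h3 : ‖A (Υ t ψ₀)‖ ≤ ‖A‖ * ‖Υ t ψ₀‖ := A.le_opNorm _
    have h4 : ‖Υ t ψ₀‖ = 1 := by rw [hΥunitary, hψ₀]
    have : ‖f' t‖ ≤ ‖φv‖ * ‖A‖ := by
      calc ‖f' t‖ ≤ ‖φv‖ * ‖Eop t (A (Υ t ψ₀))‖ := h1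
        _ = ‖φv‖ * ‖A (Υ t ψ₀)‖ := by rw [h2]
        _ ≤ ‖φv‖ * (‖A‖ * ‖Υ t ψ₀‖) := by
            exact mul_le_mul_of_nonneg_left h3 (norm_nonneg _)
        _ = ‖φv‖ * ‖A‖ := by rw [h4, mul_one]
    calc ‖f' t‖ ≤ ‖φv‖ * ‖A‖ := this
      _ = ((‖A‖₊ * ‖φv‖₊ : NNReal) : ℝ) := by
          simp [NNReal.coe_mul, coe_nnnorm, mul_comm]
  have hlip := lipschitzWith_of_hasDerivAt_off_finite hD hfcont hfderiv _ hbound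
  convert hlip using 2 with t
end

section
/- Let A, B be skew-adjoint operators on a Hilbert space H generating a bilinear control system ψ' = (A + u(t)B)ψ, with B bounded. Suppose there exist unit vectors ψ₀, ψ₁ whose B-orbit closures {e^{KB}ψ₀ : K ∈ ℝ} and {e^{KB}ψ₁ : K ∈ ℝ} are at distance δ > 0, and suppose A is bounded. Then for every piecewise constant control u and every time t < δ/‖A‖, we have ‖Υᵘ_t ψ₀ − ψ₁‖ ≥ δ − t‖A‖ > 0; in particular ψ₁ is not approximately reachable from ψ₀ in time less than δ/‖A‖. -/
set_option maxHeartbeats 1000000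
set_option synthInstance.maxHeartbeats 400000

open Complex NormedSpace

/-- A mean value inequality where the derivative is only assumed on the open interval. -/
lemma aux_mvt_open {E : Type*} [NormedAddCommGroup E] [NormedSpace ℝ E]
    {f : ℝ → E} {C a b : ℝ} (hab : a ≤ b)
    (hf : ContinuousOn f (Set.Icc a b))
    (hd : ∀ x ∈ Set.Ioo a b, ∃ f', HasDerivAt f f' x ∧ ‖f'‖ ≤ C) :
    ‖f b - f a‖ ≤ C * (b - a) := by
  rcases eq_or_lt_of_le hab with rfl | hlt
  · simp
  choose! f' hf' hbd using hd
  have key : ∀ a' ∈ Set.Ioo a b, ‖f b - f a'‖ ≤ C * (b - a') := by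
    intro a' ha'
    have h1 : ContinuousOn f (Set.Icc a' b) := hf.mono (Set.Icc_subset_Icc ha'.1.le le_rfl)
    have h2 : ∀ x ∈ Set.Ico a' b, HasDerivWithinAt f (f' x) (Set.Ici x) x := fun x hx =>
      (hf' x ⟨lt_of_lt_of_le ha'.1 hx.1, hx.2⟩).hasDerivWithinAt
    have h3 : ∀ x ∈ Set.Ico a' b, ‖f' x‖ ≤ C := fun x hx =>
      hbd x ⟨lt_of_lt_of_le ha'.1 hx.1, hx.2⟩
    have := norm_image_sub_le_of_norm_deriv_right_le_segment h1 h2 h3 b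
      (Set.right_mem_Icc.2 ha'.2.le)
    simpa using this
  have hne : (nhdsWithin a (Set.Ioo a b)).NeBot := by
    apply mem_closure_iff_nhdsWithin_neBot.1
    rw [closure_Ioo hlt.ne]
    exact Set.left_mem_Icc.2 hab
  have t1 : Filter.Tendsto (fun a' => ‖f b - f a'‖) (nhdsWithin a (Set.Ioo a b))
      (nhds ‖f b - f a‖) := by
    have h := (hf.continuousWithinAt (Set.left_mem_Icc.2 hab)).mono Set.Ioo_subset_Icc_self
    exact (Filter.Tendsto.sub tendsto_const_nhds h).norm
  have t2 : Filter.Tendsto (fun a' => C * (b - a')) (nhdsWithin a (Set.Ioo a b))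
      (nhds (C * (b - a))) :=
    ((continuous_const.mul (continuous_const.sub continuous_id)).tendsto a).mono_left
      nhdsWithin_le_nhds
  exact le_of_tendsto_of_tendsto t1 t2 (Filter.eventually_of_mem self_mem_nhdsWithin key)

/-- A function locally eventually constant off `D` is constant on open intervals avoiding `D`. -/
lemma aux_locally_const {u : ℝ → ℝ} {D : Set ℝ}
    (hu : ∀ t ∉ D, ∀ᶠ s in nhds t, u s = u t)
    {a b : ℝ} (hdisj : ∀ x ∈ Set.Ioo a b, x ∉ D)
    {x y : ℝ} (hx : x ∈ Set.Ioo a b) (hy : y ∈ Set.Ioo a b) : u x = u y := by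
  have hlc : IsLocallyConstant (fun p : Set.Ioo a b => u p) := by
    rw [IsLocallyConstant.iff_eventually_eq]
    intro p
    exact (continuous_subtype_val.tendsto p).eventually (hu p (hdisj p p.2))
  haveI : PreconnectedSpace (Set.Ioo a b) := Subtype.preconnectedSpace isPreconnected_Ioo
  exact hlc.apply_eq_of_preconnectedSpace ⟨x, hx⟩ ⟨y, hy⟩

lemma aux_exp_add {H : Type*} [NormedAddCommGroup H] [InnerProductSpace ℂ H] [CompleteSpace H]
    (B : H →L[ℂ] H) (K₁ K₂ : ℝ) :
    NormedSpace.exp ((K₁ + K₂) • B) = NormedSpace.exp (K₁ • B) * NormedSpace.exp (K₂ • B) := by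
  rw [add_smul]
  let +nondep : NormedAlgebra ℚ (H →L[ℂ] H) := .restrictScalars ℚ ℂ _
  exact exp_add_of_commute (((Commute.refl B).smul_left K₁).smul_right K₂)

lemma aux_exp_isometry {H : Type*} [NormedAddCommGroup H] [InnerProductSpace ℂ H]
    [CompleteSpace H] (B : H →L[ℂ] H) (hB : ContinuousLinearMap.adjoint B = -B)
    (K : ℝ) (x : H) : ‖NormedSpace.exp (K • B) x‖ = ‖x‖ := by
  have hadj : ContinuousLinearMap.adjoint (NormedSpace.exp (K • B)) = NormedSpace.exp ((-K) • B) := by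
    have : ContinuousLinearMap.adjoint (NormedSpace.exp (K • B)) = star (NormedSpace.exp (K • B)) := rfl
    rw [this, star_exp, star_smul]
    have hsB : star B = -B := hB ▸ rfl
    rw [hsB]
    simp [neg_smul, smul_neg]
  have hinv : NormedSpace.exp ((-K) • B) (NormedSpace.exp (K • B) x) = x := by
    have h1 : NormedSpace.exp ((-K) • B) * NormedSpace.exp (K • B) = 1 := by
      rw [← aux_exp_add]
      simp [NormedSpace.exp_zero]
    calc NormedSpace.exp ((-K) • B) (NormedSpace.exp (K • B) x)
        = (NormedSpace.exp ((-K) • B) * NormedSpace.exp (K • B)) x := rfl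
      _ = x := by rw [h1]; rfl
  have hinner : (inner ℂ (NormedSpace.exp (K • B) x) (NormedSpace.exp (K • B) x) : ℂ) = inner ℂ x x := by
    calc (inner ℂ (NormedSpace.exp (K • B) x) (NormedSpace.exp (K • B) x) : ℂ)
        = inner ℂ x (ContinuousLinearMap.adjoint (NormedSpace.exp (K • B)) (NormedSpace.exp (K • B) x)) := by
          rw [ContinuousLinearMap.adjoint_inner_right]
      _ = inner ℂ x x := by rw [hadj, hinv]
  have h1 : ‖NormedSpace.exp (K • B) x‖ ^ 2 = ‖x‖ ^ 2 := by
    rw [← @inner_self_eq_norm_sq ℂ, ← @inner_self_eq_norm_sq ℂ, hinner]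
  nlinarith [norm_nonneg (NormedSpace.exp (K • B) x), norm_nonneg x, h1]

lemma aux_le_infDist {H : Type*} [MetricSpace H] {s : Set H} (hs : s.Nonempty)
    {x : H} {c : ℝ} (h : ∀ y ∈ s, c ≤ dist x y) : c ≤ Metric.infDist x s := by
  by_contra hlt
  rcases (Metric.infDist_lt_iff hs).1 (lt_of_not_ge hlt) with ⟨y, hy, hd⟩
  exact absurd (h y hy) (not_le.2 hd)

lemma aux_exp_deriv {H : Type*} [NormedAddCommGroup H] [InnerProductSpace ℂ H] [CompleteSpace H]
    (B : H →L[ℂ] H) (a c s : ℝ) :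
    HasDerivAt (fun r : ℝ => NormedSpace.exp (((a - r) * c) • B))
      ((-c) • (NormedSpace.exp (((a - s) * c) • B) * B)) s := by
  have h1 : HasDerivAt (fun r : ℝ => (a - r) * c) (-c) s := by
    simpa using ((hasDerivAt_id s).const_sub a).mul_const c
  have h2 : HasDerivAt (fun τ : ℝ => NormedSpace.exp (τ • B))
      (NormedSpace.exp (((a - s) * c) • B) * B) ((a - s) * c) := by
    exact hasDerivAt_exp_smul_const B _
  have h3 := h2.scomp s h1
  simpa [Function.comp_def] using h3

/-- If the `B`-orbit closures of two unit vectors `ψ₀, ψ₁` are at distance at least `δ > 0` and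
`A` is bounded, then for every piecewise constant control `u` and every time `0 ≤ t` with
`t ‖A‖ < δ`, one has `‖Υᵘ_t ψ₀ - ψ₁‖ ≥ δ - t ‖A‖ > 0`: `ψ₁` is not approximately reachable from
`ψ₀` in time less than `δ / ‖A‖`. -/
theorem not_reachable_in_small_time
    {H : Type*} [NormedAddCommGroup H] [InnerProductSpace ℂ H] [CompleteSpace H]
    (A B : H →L[ℂ] H)
    (hA : ContinuousLinearMap.adjoint A = -A) (hB : ContinuousLinearMap.adjoint B = -B)
    (u : ℝ → ℝ) (D : Set ℝ) (hD : D.Finite)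
    (hu : ∀ t ∉ D, ∀ᶠ s in nhds t, u s = u t)
    (Υ : ℝ → H →L[ℂ] H) (hΥ0 : Υ 0 = 1)
    (hΥunitary : ∀ t (ψ : H), ‖Υ t ψ‖ = ‖ψ‖)
    (hΥcont : ∀ ψ : H, Continuous fun t => Υ t ψ)
    (hode : ∀ (ψ : H), ∀ t ∉ D,
      HasDerivAt (fun s => Υ s ψ) (A (Υ t ψ) + u t • B (Υ t ψ)) t)
    (ψ₀ ψ₁ : H) (hψ₀ : ‖ψ₀‖ = 1) (hψ₁ : ‖ψ₁‖ = 1)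
    (δ : ℝ) (hδpos : 0 < δ)
    (hdist : ∀ x ∈ closure {x : H | ∃ K : ℝ, x = NormedSpace.exp (K • B) ψ₀},
      ∀ y ∈ closure {y : H | ∃ K : ℝ, y = NormedSpace.exp (K • B) ψ₁}, δ ≤ ‖x - y‖) :
    ∀ t : ℝ, 0 ≤ t → t * ‖A‖ < δ →
      δ - t * ‖A‖ ≤ ‖Υ t ψ₀ - ψ₁‖ ∧ 0 < ‖Υ t ψ₀ - ψ₁‖ := by
  intro t ht htA
  set S₀ : Set H := {x : H | ∃ K : ℝ, x = NormedSpace.exp (K • B) ψ₀} with hS₀def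
  have hS₀ne : S₀.Nonempty := ⟨ψ₀, 0, by simp [NormedSpace.exp_zero]⟩
  set f : ℝ → ℝ := fun s => Metric.infDist (Υ s ψ₀) S₀ with hfdef
  -- the core step estimate
  have hstep : ∀ a b c : ℝ, a ≤ b → (∀ s ∈ Set.Ioo a b, s ∉ D) →
      (∀ s ∈ Set.Ioo a b, u s = c) →
      ‖Υ b ψ₀ - NormedSpace.exp (((b - a) * c) • B) (Υ a ψ₀)‖ ≤ ‖A‖ * (b - a) := by
    intro a b c hab hDdisj huc
    set g : ℝ → H := fun s => NormedSpace.exp (((a - s) * c) • B) (Υ s ψ₀) with hgdef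
    have hexpcont : Continuous fun s : ℝ => NormedSpace.exp (((a - s) * c) • B) :=
      let +nondep : NormedAlgebra ℚ (H →L[ℂ] H) := .restrictScalars ℚ ℂ _
      NormedSpace.exp_continuous.comp
        (((continuous_const.sub continuous_id).mul continuous_const).smul continuous_const)
    have hgc : ContinuousOn g (Set.Icc a b) :=
      (hexpcont.clm_apply (hΥcont ψ₀)).continuousOn
    have hder : ∀ s ∈ Set.Ioo a b,
        HasDerivAt g (NormedSpace.exp (((a - s) * c) • B) (A (Υ s ψ₀))) s := by
      intro s hs
      have hE : HasDerivAt (fun r : ℝ => NormedSpace.exp (((a - r) * c) • B))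
          ((-c) • (NormedSpace.exp (((a - s) * c) • B) * B)) s := aux_exp_deriv B a c s
      have hΥd : HasDerivAt (fun r => Υ r ψ₀) (A (Υ s ψ₀) + u s • B (Υ s ψ₀)) s :=
        hode ψ₀ s (hDdisj s hs)
      have hE' : HasDerivAt (fun r : ℝ => (NormedSpace.exp (((a - r) * c) • B)).restrictScalars ℝ)
          (((-c) • (NormedSpace.exp (((a - s) * c) • B) * B)).restrictScalars ℝ) s :=
        (ContinuousLinearMap.restrictScalarsL ℂ H H ℝ ℝ).hasFDerivAt.comp_hasDerivAt s hE
      have hcomb := hE'.clm_apply hΥd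
      simp only [ContinuousLinearMap.coe_restrictScalars'] at hcomb
      have : ((-c) • (NormedSpace.exp (((a - s) * c) • B) * B)) (Υ s ψ₀)
            + NormedSpace.exp (((a - s) * c) • B) (A (Υ s ψ₀) + u s • B (Υ s ψ₀))
          = NormedSpace.exp (((a - s) * c) • B) (A (Υ s ψ₀)) := by
        rw [huc s hs]
        simp only [ContinuousLinearMap.smul_apply, ContinuousLinearMap.mul_apply,
          map_add, map_smul, ContinuousLinearMap.map_smul_of_tower]
        module
      rw [this] at hcomb
      exact hcomb
    have hmvt := aux_mvt_open hab hgc (fun x hx =>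
      ⟨_, hder x hx, by
        rw [aux_exp_isometry B hB]
        calc ‖A (Υ x ψ₀)‖ ≤ ‖A‖ * ‖Υ x ψ₀‖ := A.le_opNorm _
          _ = ‖A‖ := by rw [hΥunitary, hψ₀, mul_one]⟩)
    have hga : g a = Υ a ψ₀ := by
      simp [hgdef, NormedSpace.exp_zero]
    have hgb : NormedSpace.exp (((b - a) * c) • B) (g b) = Υ b ψ₀ := by
      rw [hgdef]
      simp only []
      rw [← ContinuousLinearMap.mul_apply, ← aux_exp_add]
      have : (b - a) * c + (a - b) * c = 0 := by ring
      rw [this]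
      simp [NormedSpace.exp_zero]
    calc ‖Υ b ψ₀ - NormedSpace.exp (((b - a) * c) • B) (Υ a ψ₀)‖
        = ‖NormedSpace.exp (((b - a) * c) • B) (g b - g a)‖ := by rw [map_sub, hgb, hga]
      _ = ‖g b - g a‖ := aux_exp_isometry B hB _ _
      _ ≤ ‖A‖ * (b - a) := hmvt
  -- step estimate for the distance function
  have hfstep : ∀ a b : ℝ, a ≤ b → (∀ s ∈ Set.Ioo a b, s ∉ D) →
      f b ≤ f a + ‖A‖ * (b - a) := by
    intro a b hab hDdisj
    rcases eq_or_lt_of_le hab with rfl | hlt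
    · simp
    have hmid : (a + b) / 2 ∈ Set.Ioo a b := ⟨by linarith, by linarith⟩
    set c : ℝ := u ((a + b) / 2) with hcdef
    have huc : ∀ s ∈ Set.Ioo a b, u s = c := fun s hs =>
      aux_locally_const hu hDdisj hs hmid
    have hst := hstep a b c hab hDdisj huc
    have : ∀ y ∈ S₀, f b - ‖A‖ * (b - a) ≤ dist (Υ a ψ₀) y := by
      rintro y ⟨K, rfl⟩
      have hmem : NormedSpace.exp (((b - a) * c + K) • B) ψ₀ ∈ S₀ := ⟨(b - a) * c + K, rfl⟩
      have h1 : f b ≤ dist (Υ b ψ₀) (NormedSpace.exp (((b - a) * c + K) • B) ψ₀) :=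
        Metric.infDist_le_dist_of_mem hmem
      have h2 : NormedSpace.exp (((b - a) * c + K) • B) ψ₀
          = NormedSpace.exp (((b - a) * c) • B) (NormedSpace.exp (K • B) ψ₀) := by
        rw [aux_exp_add, ContinuousLinearMap.mul_apply]
      have h3 : dist (Υ b ψ₀) (NormedSpace.exp (((b - a) * c + K) • B) ψ₀)
          ≤ ‖A‖ * (b - a) + dist (Υ a ψ₀) (NormedSpace.exp (K • B) ψ₀) := by
        rw [dist_eq_norm, h2]
        calc ‖Υ b ψ₀ - NormedSpace.exp (((b - a) * c) • B) (NormedSpace.exp (K • B) ψ₀)‖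
            ≤ ‖Υ b ψ₀ - NormedSpace.exp (((b - a) * c) • B) (Υ a ψ₀)‖
              + ‖NormedSpace.exp (((b - a) * c) • B) (Υ a ψ₀)
                - NormedSpace.exp (((b - a) * c) • B) (NormedSpace.exp (K • B) ψ₀)‖ := by
              have := norm_sub_le_norm_sub_add_norm_sub (Υ b ψ₀)
                (NormedSpace.exp (((b - a) * c) • B) (Υ a ψ₀))
                (NormedSpace.exp (((b - a) * c) • B) (NormedSpace.exp (K • B) ψ₀))
              exact this
          _ ≤ ‖A‖ * (b - a) + dist (Υ a ψ₀) (NormedSpace.exp (K • B) ψ₀) := by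
              rw [← map_sub, aux_exp_isometry B hB, dist_eq_norm]
              exact add_le_add hst le_rfl
      linarith [h1, h3]
    have := aux_le_infDist hS₀ne this
    have hfa : Metric.infDist (Υ a ψ₀) S₀ = f a := rfl
    linarith [this]
  -- f t ≤ ‖A‖ * t via a supremum argument
  have hkey : f t ≤ ‖A‖ * t := by
    set G : Set ℝ := {s | s ∈ Set.Icc 0 t ∧ f s ≤ ‖A‖ * s} with hGdef
    have hf0 : f 0 = 0 := by
      apply Metric.infDist_zero_of_mem
      refine ⟨0, ?_⟩
      rw [hΥ0]
      simp [NormedSpace.exp_zero]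
    have h0G : (0 : ℝ) ∈ G := ⟨⟨le_refl 0, ht⟩, by rw [hf0]; simp⟩
    have hfcont : Continuous f := (Metric.continuous_infDist_pt S₀).comp (hΥcont ψ₀)
    have hGclosed : IsClosed G := by
      have : G = Set.Icc 0 t ∩ {s | f s ≤ ‖A‖ * s} := rfl
      rw [this]
      exact isClosed_Icc.inter (isClosed_le hfcont (continuous_const.mul continuous_id))
    have hGcomp : IsCompact G :=
      isCompact_Icc.of_isClosed_subset hGclosed (fun s hs => hs.1)
    set m : ℝ := sSup G with hmdef
    have hmG : m ∈ G := hGcomp.sSup_mem ⟨0, h0G⟩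
    rcases eq_or_lt_of_le hmG.1.2 with hmt | hmt
    · rw [← hmt]; exact hmG.2
    · exfalso
      -- find b ∈ Ioc m t with Ioo m b ∩ D = ∅
      obtain ⟨b, hbmem, hbdisj⟩ : ∃ b, b ∈ Set.Ioc m t ∧ ∀ s ∈ Set.Ioo m b, s ∉ D := by
        have hfin : (D ∩ Set.Ioc m t).Finite := hD.inter_of_left _
        by_cases hne : (D ∩ Set.Ioc m t).Nonempty
        · obtain ⟨d, hd, hdmin⟩ := Set.exists_min_image _ id hfin hne
          refine ⟨d, hd.2, ?_⟩
          intro s hs hsD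
          have hsmem : s ∈ D ∩ Set.Ioc m t :=
            ⟨hsD, hs.1, le_trans hs.2.le hd.2.2⟩
          exact absurd (hdmin s hsmem) (not_le.2 hs.2)
        · refine ⟨t, ⟨hmt, le_refl t⟩, ?_⟩
          intro s hs hsD
          exact hne ⟨s, hsD, hs.1, hs.2.le⟩
      have hfb : f b ≤ ‖A‖ * b := by
        have := hfstep m b hbmem.1.le hbdisj
        have hAm : ‖A‖ * m + ‖A‖ * (b - m) = ‖A‖ * b := by ring
        linarith [hmG.2]
      have hbG : b ∈ G := ⟨⟨le_trans hmG.1.1 hbmem.1.le, hbmem.2⟩, hfb⟩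
      have : b ≤ m := le_csSup hGcomp.bddAbove hbG
      exact absurd this (not_le.2 hbmem.1)
  -- conclude
  have hψ₁mem : ψ₁ ∈ closure {y : H | ∃ K : ℝ, y = NormedSpace.exp (K • B) ψ₁} :=
    subset_closure ⟨0, by simp [NormedSpace.exp_zero]⟩
  have hmain : δ - ‖Υ t ψ₀ - ψ₁‖ ≤ f t := by
    apply aux_le_infDist hS₀ne
    rintro y ⟨K, rfl⟩
    have h1 : δ ≤ ‖NormedSpace.exp (K • B) ψ₀ - ψ₁‖ :=
      hdist _ (subset_closure ⟨K, rfl⟩) _ hψ₁mem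
    have h2 : ‖NormedSpace.exp (K • B) ψ₀ - ψ₁‖
        ≤ ‖NormedSpace.exp (K • B) ψ₀ - Υ t ψ₀‖ + ‖Υ t ψ₀ - ψ₁‖ :=
      norm_sub_le_norm_sub_add_norm_sub _ _ _
    rw [dist_eq_norm]
    linarith [norm_sub_rev (Υ t ψ₀) (NormedSpace.exp (K • B) ψ₀)]
  have hA' : f t ≤ t * ‖A‖ := by rw [mul_comm] at hkey; exact hkey
  constructor
  · linarith
  · linarith
end

section
/- Let B be a bounded skew-adjoint operator on a Hilbert space H, ψ₀ ∈ H a unit vector, K ∈ ℝ, and for η > 0 let u_η be the control equal to the constant K/η on [0, η] and 0 elsewhere. Then the solution at time η of ψ' = (A + u_η(t)B)ψ restricted to a finite-dimensional invariant subspace (the Galerkin approximation of order N) converges to e^{KB}π_N ψ₀ as η → 0⁺, where π_N is the orthogonal projection onto the span of the first N eigenvectors of A. -/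
open Complex NormedSpace Filter

/-- Galerkin limit of impulsive controls: let `A` be skew-adjoint with orthonormal eigenvectors
`φ`, `πN` the orthogonal projection onto the span `L` of the first `N` eigenvectors, and let
`A^{(N)} = πN A πN`, `B^{(N)} = πN B πN` be the compressions. For `η > 0` let `u_η` be the
control equal to `K/η` on `[0, η]` and `0` elsewhere, with propagator `X η` of
`x' = (A^{(N)} + u_η(t) B^{(N)}) x` (so `X η t = exp(t(A^{(N)} + (K/η)B^{(N)}))` on `[0, η]`).
Then `X η η (πN ψ₀) → exp(K B^{(N)}) (πN ψ₀)` as `η → 0⁺`. -/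
theorem galerkin_impulse_limit
    {H : Type*} [NormedAddCommGroup H] [InnerProductSpace ℂ H] [CompleteSpace H]
    (A B : H →L[ℂ] H)
    (hA : ContinuousLinearMap.adjoint A = -A) (hB : ContinuousLinearMap.adjoint B = -B)
    (φ : ℕ → H) (hφ : Orthonormal ℂ φ)
    (lam : ℕ → ℝ) (heig : ∀ k : ℕ, A (φ k) = ((Complex.I * lam k : ℂ)) • φ k)
    (N : ℕ) (πN : H →L[ℂ] H)
    (hπ : ∀ x : H, πN x ∈ Submodule.span ℂ (Set.range fun i : Fin N => φ i) ∧
      x - πN x ∈ (Submodule.span ℂ (Set.range fun i : Fin N => φ i))ᗮ)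
    (ψ₀ : H) (hψ₀ : ‖ψ₀‖ = 1) (K : ℝ)
    (X : ℝ → ℝ → H →L[ℂ] H)
    (hX : ∀ η : ℝ, 0 < η → ∀ t ∈ Set.Icc (0 : ℝ) η,
      X η t = NormedSpace.exp
        ((t : ℂ) • ((πN ∘L A ∘L πN) + (K / η : ℂ) • (πN ∘L B ∘L πN)))) :
    Tendsto (fun η : ℝ => X η η (πN ψ₀)) (nhdsWithin 0 (Set.Ioi 0))
      (nhds (NormedSpace.exp ((K : ℂ) • (πN ∘L B ∘L πN)) (πN ψ₀))) := by
  set A' : H →L[ℂ] H := πN ∘L A ∘L πN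
  set B' : H →L[ℂ] H := πN ∘L B ∘L πN
  have key : Tendsto (fun η : ℝ =>
      (NormedSpace.exp ((η : ℂ) • A' + (K : ℂ) • B')) (πN ψ₀))
      (nhdsWithin 0 (Set.Ioi 0))
      (nhds (NormedSpace.exp ((K : ℂ) • B') (πN ψ₀))) := by
    have h1 : Tendsto (fun η : ℝ => (η : ℂ) • A' + (K : ℂ) • B')
        (nhdsWithin 0 (Set.Ioi 0)) (nhds ((K : ℂ) • B')) := by
      have : Tendsto (fun η : ℝ => (η : ℂ) • A' + (K : ℂ) • B') (nhds 0)
          (nhds (((0 : ℝ) : ℂ) • A' + (K : ℂ) • B')) := by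
        apply Tendsto.add _ tendsto_const_nhds
        exact (Continuous.smul (Complex.continuous_ofReal) continuous_const).tendsto 0
      simpa using this.mono_left nhdsWithin_le_nhds
    have h2 := (NormedSpace.exp_analytic (𝕂 := ℂ) (𝔸 := H →L[ℂ] H)
        ((K : ℂ) • B')).continuousAt.tendsto
    have hev : Continuous fun T : H →L[ℂ] H => T (πN ψ₀) :=
      (ContinuousLinearMap.apply ℂ H (πN ψ₀)).continuous
    exact (hev.tendsto _).comp (h2.comp h1)
  refine key.congr' ?_
  filter_upwards [self_mem_nhdsWithin] with η hη
  have hη' : (0 : ℝ) < η := hη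
  rw [hX η hη' η ⟨le_of_lt hη', le_refl η⟩]
  have hne : (η : ℂ) ≠ 0 := by exact_mod_cast hη'.ne'
  rw [smul_add, smul_smul, show (η:ℂ) * ((K:ℂ)/(η:ℂ)) = (K:ℂ) from by field_simp]
end
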